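/- arXiv:2602.04548 — 2 statements merged into one kernel-verified Lean document; each statement's English description precedes it below -/
import Mathlib

section
/- Let Ψ(x,y,z) = ((z e^{−8x}/2) ∂_1 h(z(1−e^{−4x}), y) − e^{−4x} h(z(1−e^{−4x}), y)), where h(z,y) = (1 − z(y+1) − √(1 − 2z(y+1) + z²(y−1)²)) / (2z²). Then the function f(x,z) = (2(z−1)e^{4x} − z) / (2(z − (z−1)e^{4x})²) satisfies the first-order PDE ∂_x f + 4z(1−z) ∂_z f = 4(z−1) f with initial condition f(0,z) = z/2 − 1. -/
/-- Generating function of the Narayana numbers. -/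
noncomputable def narayanaGF (z y : ℝ) : ℝ :=
  (1 - z * (y + 1) - Real.sqrt (1 - 2 * z * (y + 1) + z ^ 2 * (y - 1) ^ 2)) / (2 * z ^ 2)

/-- The function `Ψ` from the SYM ν=2 solution (context for Statement 4). -/
noncomputable def PsiSym (x y z : ℝ) : ℝ :=
  z * Real.exp (-8 * x) / 2 *
      deriv (fun w => narayanaGF w y) (z * (1 - Real.exp (-4 * x))) -
    Real.exp (-4 * x) * narayanaGF (z * (1 - Real.exp (-4 * x))) y

/-- The reduced generating function `f` of the SYM ν=2 model. -/
noncomputable def fSym (x z : ℝ) : ℝ :=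
  (2 * (z - 1) * Real.exp (4 * x) - z) / (2 * (z - (z - 1) * Real.exp (4 * x)) ^ 2)

/-- `f(x,z) = (2(z−1)e^{4x} − z)/(2(z−(z−1)e^{4x})²)` satisfies the
first-order PDE `∂_x f + 4z(1−z) ∂_z f = 4(z−1) f` with `f(0,z) = z/2 − 1`. -/
theorem fSym_solves_PDE :
    (∀ x z : ℝ, z - (z - 1) * Real.exp (4 * x) ≠ 0 →
      deriv (fun x' => fSym x' z) x + 4 * z * (1 - z) * deriv (fun z' => fSym x z') z =
        4 * (z - 1) * fSym x z) ∧
    (∀ z : ℝ, fSym 0 z = z / 2 - 1) := by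
  constructor
  · intro x z hD
    set E := Real.exp (4 * x) with hEdef
    have hE0 : E ≠ 0 := Real.exp_ne_zero _
    have hv0 : 2 * (z - (z - 1) * E) ^ 2 ≠ 0 := by
      positivity
    have hE : HasDerivAt (fun x' => Real.exp (4 * x')) (E * 4) x := by
      simpa using (HasDerivAt.exp ((hasDerivAt_id x).const_mul 4))
    -- x derivative
    have hu : HasDerivAt (fun x' => 2 * (z - 1) * Real.exp (4 * x') - z)
        (2 * (z - 1) * (E * 4)) x := (hE.const_mul (2 * (z - 1))).sub_const z
    have h1 : HasDerivAt (fun x' => z - (z - 1) * Real.exp (4 * x'))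
        (-((z - 1) * (E * 4))) x := by
      simpa using ((hE.const_mul (z - 1)).const_sub z)
    have hv : HasDerivAt (fun x' => 2 * (z - (z - 1) * Real.exp (4 * x')) ^ 2)
        (2 * (2 * (z - (z - 1) * E) ^ 1 * -((z - 1) * (E * 4)))) x := by
      simpa using (h1.pow 2).const_mul 2
    have hfx : HasDerivAt (fun x' => fSym x' z)
        ((2 * (z - 1) * (E * 4) * (2 * (z - (z - 1) * E) ^ 2) -
          (2 * (z - 1) * E - z) * (2 * (2 * (z - (z - 1) * E) ^ 1 * -((z - 1) * (E * 4))))) /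
          (2 * (z - (z - 1) * E) ^ 2) ^ 2) x := by
      simpa [fSym] using hu.fun_div hv hv0
    -- z derivative
    have hnum : HasDerivAt (fun z' => 2 * (z' - 1) * E - z') (2 * 1 * E - 1) z :=
      ((((hasDerivAt_id z).sub_const 1).const_mul 2).mul_const E).sub (hasDerivAt_id z)
    have h2 : HasDerivAt (fun z' => z' - (z' - 1) * E) (1 - 1 * E) z :=
      (hasDerivAt_id z).sub (((hasDerivAt_id z).sub_const 1).mul_const E)
    have hden : HasDerivAt (fun z' => 2 * (z' - (z' - 1) * E) ^ 2)
        (2 * (2 * (z - (z - 1) * E) ^ 1 * (1 - 1 * E))) z := by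
      simpa using (h2.pow 2).const_mul 2
    have hfz : HasDerivAt (fun z' => fSym x z')
        (((2 * 1 * E - 1) * (2 * (z - (z - 1) * E) ^ 2) -
          (2 * (z - 1) * E - z) * (2 * (2 * (z - (z - 1) * E) ^ 1 * (1 - 1 * E)))) /
          (2 * (z - (z - 1) * E) ^ 2) ^ 2) z := by
      simpa [fSym] using hnum.fun_div hden hv0
    rw [hfx.deriv, hfz.deriv]
    simp only [fSym, ← hEdef]
    field_simp
    ring
  · intro z
    simp [fSym]
    ring
end

section
/- The number of non-crossing partitions of a set of m cyclically ordered points into exactly n blocks equals the Narayana number N_{m,n} = (1/m) C(m,n) C(m,n−1). -/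
open Finset
namespace NCX

def cnt (X : Finset ℕ) (y : ℕ) : ℕ := (X.filter (· ≤ y)).card

/-- prefix-swap of a pair of sets at position `x` -/
def pswap (S T : Finset ℕ) (x : ℕ) : Finset ℕ × Finset ℕ :=
  (T.filter (· ≤ x) ∪ S.filter (fun y => ¬ y ≤ x),
   S.filter (· ≤ x) ∪ T.filter (fun y => ¬ y ≤ x))

lemma pswap_subset {S T : Finset ℕ} {M x : ℕ} (hS : S ⊆ Icc 1 M) (hT : T ⊆ Icc 1 M) :
    (pswap S T x).1 ⊆ Icc 1 M ∧ (pswap S T x).2 ⊆ Icc 1 M := by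
  constructor <;> intro a ha <;> simp only [pswap, mem_union, mem_filter] at ha <;>
    rcases ha with ⟨h, _⟩ | ⟨h, _⟩ <;> [exact hT h; exact hS h; exact hS h; exact hT h]

lemma filter_le_pswap (A B : Finset ℕ) {x z : ℕ} (hz : z ≤ x) :
    (A.filter (· ≤ x) ∪ B.filter (fun y => ¬ y ≤ x)).filter (· ≤ z) = A.filter (· ≤ z) := by
  ext a; simp only [mem_filter, mem_union]
  constructor
  · rintro ⟨⟨h1, _⟩ | ⟨h1, h2⟩, h3⟩
    · exact ⟨h1, h3⟩
    · omega
  · rintro ⟨h1, h3⟩; exact ⟨Or.inl ⟨h1, h3.trans hz⟩, h3⟩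

lemma cnt_pswap_fst {S T : Finset ℕ} {x z : ℕ} (hz : z ≤ x) :
    cnt (pswap S T x).1 z = cnt T z := by
  unfold cnt pswap; rw [filter_le_pswap _ _ hz]

lemma cnt_pswap_snd {S T : Finset ℕ} {x z : ℕ} (hz : z ≤ x) :
    cnt (pswap S T x).2 z = cnt S z := by
  unfold cnt pswap; rw [filter_le_pswap _ _ hz]

lemma card_pswap_fst (S T : Finset ℕ) (x : ℕ) :
    (pswap S T x).1.card + cnt S x = S.card + cnt T x := by
  unfold pswap cnt
  rw [card_union_of_disjoint]
  · have := card_filter_add_card_filter_not (s := S) (p := (· ≤ x))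
    omega
  · simp only [disjoint_left, mem_filter]; rintro a ⟨_, h1⟩ ⟨_, h2⟩; exact h2 h1

lemma card_pswap_snd (S T : Finset ℕ) (x : ℕ) :
    (pswap S T x).2.card + cnt T x = T.card + cnt S x := by
  unfold pswap cnt
  rw [card_union_of_disjoint]
  · have := card_filter_add_card_filter_not (s := T) (p := (· ≤ x))
    omega
  · simp only [disjoint_left, mem_filter]; rintro a ⟨_, h1⟩ ⟨_, h2⟩; exact h2 h1

lemma pswap_pswap (S T : Finset ℕ) (x : ℕ) :
    pswap (pswap S T x).1 (pswap S T x).2 x = (S, T) := by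
  have key : ∀ A B : Finset ℕ,
      (A.filter (· ≤ x) ∪ B.filter (fun y => ¬ y ≤ x)).filter (fun y => ¬ y ≤ x)
        = B.filter (fun y => ¬ y ≤ x) := by
    intro A B; ext a; simp only [mem_filter, mem_union]
    constructor
    · rintro ⟨⟨h1, h2⟩ | ⟨h1, h2⟩, h3⟩
      · exact absurd h2 h3
      · exact ⟨h1, h2⟩
    · rintro ⟨h1, h3⟩; exact ⟨Or.inr ⟨h1, h3⟩, h3⟩
  unfold pswap
  simp only [Prod.mk.injEq]
  constructor
  · rw [filter_le_pswap _ _ le_rfl, key]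
    exact filter_union_filter_not_eq (p := (· ≤ x)) (s := S)
  · rw [filter_le_pswap _ _ le_rfl, key]
    exact filter_union_filter_not_eq (p := (· ≤ x)) (s := T)

lemma cnt_mono (X : Finset ℕ) {y z : ℕ} (h : y ≤ z) : cnt X y ≤ cnt X z := by
  apply card_le_card; intro a ha; simp only [mem_filter] at *; exact ⟨ha.1, ha.2.trans h⟩

lemma cnt_zero {X : Finset ℕ} {M : ℕ} (hX : X ⊆ Icc 1 M) : cnt X 0 = 0 := by
  simp only [cnt, card_eq_zero]
  ext a; simp only [mem_filter, notMem_empty, iff_false, not_and]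
  intro ha h; have := hX ha; simp only [mem_Icc] at this; omega

lemma cnt_succ (X : Finset ℕ) (y : ℕ) :
    cnt X (y + 1) = cnt X y + (if y + 1 ∈ X then 1 else 0) := by
  unfold cnt
  have : X.filter (· ≤ y + 1) = (X.filter (· ≤ y)) ∪ X.filter (· = y + 1) := by
    ext a; simp only [mem_filter, mem_union]
    constructor
    · rintro ⟨ha, h⟩
      by_cases hy : a ≤ y
      · exact Or.inl ⟨ha, hy⟩
      · exact Or.inr ⟨ha, by omega⟩
    · rintro (⟨ha, h⟩ | ⟨ha, h⟩) <;> exact ⟨ha, by omega⟩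
  rw [this, card_union_of_disjoint]
  · congr 1
    split_ifs with h
    · rw [show X.filter (· = y+1) = {y+1} from ?_]; · simp
      ext a; simp only [mem_filter, mem_singleton]
      exact ⟨fun h => h.2, fun h' => by subst h'; exact ⟨h, rfl⟩⟩
    · rw [card_eq_zero]; ext a; simp only [mem_filter, notMem_empty, iff_false, not_and]
      rintro ha rfl; exact h ha
  · simp only [disjoint_left, mem_filter]; rintro a ⟨_, h1⟩ ⟨_, rfl⟩; omega

lemma cnt_eq_card {X : Finset ℕ} {M y : ℕ} (hX : X ⊆ Icc 1 M) (h : M ≤ y) :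
    cnt X y = X.card := by
  unfold cnt; rw [filter_true_of_mem]
  intro a ha; have := hX ha; simp only [mem_Icc] at this; omega

/-- at the first crossing point: exact relations -/
lemma find_crossing_spec {S T : Finset ℕ} {M : ℕ} (hS : S ⊆ Icc 1 M) (hT : T ⊆ Icc 1 M)
    (h : ∃ x, cnt S x < cnt T x) :
    cnt T (Nat.find h) = cnt S (Nat.find h) + 1 ∧
    Nat.find h ∈ T ∧ Nat.find h ∉ S ∧ 1 ≤ Nat.find h ∧ Nat.find h ≤ M := by
  have hspec : cnt S (Nat.find h) < cnt T (Nat.find h) := Nat.find_spec h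
  have hmin : ∀ z, z < Nat.find h → ¬ (cnt S z < cnt T z) := fun z hz => Nat.find_min h hz
  generalize hgen : Nat.find h = x at hspec hmin ⊢
  have hx0 : x ≠ 0 := by
    intro h0; rw [h0, cnt_zero hS, cnt_zero hT] at hspec; omega
  obtain ⟨y, rfl⟩ : ∃ y, x = y + 1 := ⟨x - 1, by omega⟩
  have hmin : ¬ (cnt S y < cnt T y) := hmin y (by omega)
  have h1 := cnt_succ S y
  have h2 := cnt_succ T y
  have hTy : y + 1 ∈ T := by
    by_contra hc; rw [if_neg hc] at h2
    have := cnt_mono S (Nat.le_succ y); omega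
  have hSy : y + 1 ∉ S := by
    intro hc
    rw [if_pos hc] at h1; rw [if_pos hTy] at h2; omega
  have hxM : y + 1 ≤ M := by have := hT hTy; simp only [mem_Icc] at this; omega
  rw [if_pos hTy] at h2; rw [if_neg hSy] at h1
  exact ⟨by omega, hTy, hSy, by omega, hxM⟩



noncomputable section
open Classical

lemma cnt_le_card (X : Finset ℕ) (y : ℕ) : cnt X y ≤ X.card := card_filter_le _ _

def AP (M a b : ℕ) : Finset (Finset ℕ × Finset ℕ) :=
  (Icc 1 M).powersetCard a ×ˢ (Icc 1 M).powersetCard b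

def Dom (S T : Finset ℕ) : Prop := ∀ x, cnt T x ≤ cnt S x

def GoodP (M a : ℕ) : Finset (Finset ℕ × Finset ℕ) := (AP M a a).filter (fun p => Dom p.1 p.2)
def BadP (M a : ℕ) : Finset (Finset ℕ × Finset ℕ) := (AP M a a).filter (fun p => ¬ Dom p.1 p.2)

lemma mem_AP {M a b : ℕ} {p : Finset ℕ × Finset ℕ} :
    p ∈ AP M a b ↔ (p.1 ⊆ Icc 1 M ∧ p.1.card = a) ∧ (p.2 ⊆ Icc 1 M ∧ p.2.card = b) := by
  simp [AP, mem_product, mem_powersetCard]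

lemma card_AP (M a b : ℕ) : (AP M a b).card = M.choose a * M.choose b := by
  simp [AP, card_product, card_powersetCard, Nat.card_Icc]

lemma good_add_bad (M a : ℕ) : (GoodP M a).card + (BadP M a).card = (AP M a a).card :=
  card_filter_add_card_filter_not _



lemma pswap_roundtrip {S T : Finset ℕ} (h : ∃ x, cnt S x < cnt T x)
    (h' : ∃ y, cnt (pswap S T (Nat.find h)).2 y < cnt (pswap S T (Nat.find h)).1 y) :
    pswap (pswap S T (Nat.find h)).1 (pswap S T (Nat.find h)).2 (Nat.find h') = (S, T) := by
  have heq : Nat.find h' = Nat.find h := by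
    rw [Nat.find_eq_iff]
    refine ⟨?_, fun z hz => ?_⟩
    · rw [cnt_pswap_fst le_rfl, cnt_pswap_snd le_rfl]; exact Nat.find_spec h
    · rw [cnt_pswap_fst hz.le, cnt_pswap_snd hz.le]; exact Nat.find_min h hz
  rw [heq, pswap_pswap]

lemma pswap_roundtrip' {S T : Finset ℕ} (h : ∃ x, cnt T x < cnt S x)
    (h' : ∃ y, cnt (pswap S T (Nat.find h)).1 y < cnt (pswap S T (Nat.find h)).2 y) :
    pswap (pswap S T (Nat.find h)).1 (pswap S T (Nat.find h)).2 (Nat.find h') = (S, T) := by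
  have heq : Nat.find h' = Nat.find h := by
    rw [Nat.find_eq_iff]
    refine ⟨?_, fun z hz => ?_⟩
    · rw [cnt_pswap_fst le_rfl, cnt_pswap_snd le_rfl]; exact Nat.find_spec h
    · rw [cnt_pswap_fst hz.le, cnt_pswap_snd hz.le]; exact Nat.find_min h hz
  rw [heq, pswap_pswap]

lemma card_badP (M a : ℕ) (ha : 1 ≤ a) : (BadP M a).card = (AP M (a+1) (a-1)).card := by
  have hsub : ∀ p ∈ BadP M a, (p.1 ⊆ Icc 1 M ∧ p.1.card = a) ∧ (p.2 ⊆ Icc 1 M ∧ p.2.card = a) := by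
    intro p hp
    exact mem_AP.1 (mem_filter.1 hp).1
  have hbadEx : ∀ p ∈ BadP M a, ∃ x, cnt p.1 x < cnt p.2 x := by
    intro p hp
    have := (mem_filter.1 hp).2
    simp only [Dom, not_forall, not_le] at this
    exact this
  have hapEx : ∀ q ∈ AP M (a+1) (a-1), ∃ x, cnt q.2 x < cnt q.1 x := by
    intro q hq
    rw [mem_AP] at hq
    refine ⟨M, ?_⟩
    rw [cnt_eq_card hq.1.1 le_rfl, cnt_eq_card hq.2.1 le_rfl, hq.1.2, hq.2.2]
    omega
  have hapSub : ∀ q ∈ AP M (a+1) (a-1),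
      (q.1 ⊆ Icc 1 M ∧ q.1.card = a+1) ∧ (q.2 ⊆ Icc 1 M ∧ q.2.card = a-1) := by
    intro q hq; exact mem_AP.1 hq
  refine card_bij' (fun p hp => pswap p.1 p.2 (Nat.find (hbadEx p hp)))
      (fun q hq => pswap q.1 q.2 (Nat.find (hapEx q hq))) ?hi ?hj ?left ?right
  case hi =>
    intro p hp
    obtain ⟨⟨hp1, hc1⟩, ⟨hp2, hc2⟩⟩ := hsub p hp
    obtain ⟨hc, hxT, hxS, hx1, hxM⟩ := find_crossing_spec hp1 hp2 (hbadEx p hp)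
    rw [mem_AP]
    have e1 := card_pswap_fst p.1 p.2 (Nat.find (hbadEx p hp))
    have e2 := card_pswap_snd p.1 p.2 (Nat.find (hbadEx p hp))
    have l1 := cnt_le_card p.1 (Nat.find (hbadEx p hp))
    have l2 := cnt_le_card p.2 (Nat.find (hbadEx p hp))
    obtain ⟨hs1, hs2⟩ := pswap_subset (x := Nat.find (hbadEx p hp)) hp1 hp2
    exact ⟨⟨hs1, by omega⟩, ⟨hs2, by omega⟩⟩
  case hj =>
    intro q hq
    obtain ⟨⟨hq1, hc1⟩, ⟨hq2, hc2⟩⟩ := hapSub q hq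
    obtain ⟨hc, hxT, hxS, hx1, hxM⟩ := find_crossing_spec hq2 hq1 (hapEx q hq)
    have e1 := card_pswap_fst q.1 q.2 (Nat.find (hapEx q hq))
    have e2 := card_pswap_snd q.1 q.2 (Nat.find (hapEx q hq))
    have l1 := cnt_le_card q.1 (Nat.find (hapEx q hq))
    have l2 := cnt_le_card q.2 (Nat.find (hapEx q hq))
    obtain ⟨hs1, hs2⟩ := pswap_subset (x := Nat.find (hapEx q hq)) hq1 hq2
    rw [BadP, mem_filter]
    constructor
    · rw [mem_AP]
      exact ⟨⟨hs1, by omega⟩, ⟨hs2, by omega⟩⟩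
    · intro hdom
      have h1 := hdom (Nat.find (hapEx q hq))
      rw [cnt_pswap_fst le_rfl, cnt_pswap_snd le_rfl] at h1
      omega
  case left =>
    intro p hp
    exact (pswap_roundtrip (hbadEx p hp) _).trans (Prod.mk.eta)
  case right =>
    intro q hq
    exact (pswap_roundtrip' (hapEx q hq) _).trans (Prod.mk.eta)

/-! ### chunk 2: mx, minD, rank lemmas, top segments -/

def mx (B : Finset ℕ) : ℕ := B.sup id

lemma mx_mem {B : Finset ℕ} (h : B.Nonempty) : mx B ∈ B := by
  obtain ⟨b, hb, he⟩ := Finset.exists_mem_eq_sup B h id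
  rw [mx, he]; exact hb

lemma le_mx {B : Finset ℕ} {x : ℕ} (h : x ∈ B) : x ≤ mx B := Finset.le_sup (f := id) h

def minD (s : Finset ℕ) : ℕ := s.min.getD 0

lemma minD_mem {s : Finset ℕ} (h : s.Nonempty) : minD s ∈ s := by
  rw [minD, ← coe_min' h]
  exact min'_mem s h

lemma minD_le {s : Finset ℕ} {x : ℕ} (hx : x ∈ s) : minD s ≤ x := by
  have h : s.Nonempty := ⟨x, hx⟩
  rw [minD, ← coe_min' h]
  exact min'_le s x hx

lemma minD_eq {s : Finset ℕ} {a : ℕ} (ha : a ∈ s) (h : ∀ x ∈ s, a ≤ x) : minD s = a :=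
  le_antisymm (minD_le ha) (h _ (minD_mem ⟨a, ha⟩))

lemma cnt_lt_of_mem {U : Finset ℕ} {x y : ℕ} (hy : y ∈ U) (hxy : x < y) :
    cnt U x < cnt U y := by
  apply card_lt_card
  rw [ssubset_iff_of_subset]
  · exact ⟨y, by simp only [mem_filter]; exact ⟨⟨hy, le_refl y⟩, by omega⟩⟩
  · intro a ha; simp only [mem_filter] at *; exact ⟨ha.1, by omega⟩

lemma cnt_pos_of_mem {U : Finset ℕ} {x z : ℕ} (hx : x ∈ U) (hz : x ≤ z) : 1 ≤ cnt U z := by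
  rw [Nat.one_le_iff_ne_zero, ← Nat.pos_iff_ne_zero, cnt, card_pos]
  exact ⟨x, by simp only [mem_filter]; exact ⟨hx, hz⟩⟩

lemma cnt_injOn (U : Finset ℕ) {x y : ℕ} (hx : x ∈ U) (hy : y ∈ U)
    (h : cnt U x = cnt U y) : x = y := by
  rcases lt_trichotomy x y with hl | he | hl
  · have := cnt_lt_of_mem hy hl; omega
  · exact he
  · have := cnt_lt_of_mem hx hl; omega

lemma image_cnt_le (U : Finset ℕ) (t : ℕ) :
    (U.filter (· ≤ t)).image (cnt U) = Icc 1 (cnt U t) := by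
  have hinj : Set.InjOn (cnt U) ↑(U.filter (· ≤ t)) := by
    intro x hx y hy h
    simp only [coe_filter, Set.mem_setOf_eq] at hx hy
    exact cnt_injOn U hx.1 hy.1 h
  have hsub : (U.filter (· ≤ t)).image (cnt U) ⊆ Icc 1 (cnt U t) := by
    intro v hv
    rw [mem_image] at hv
    obtain ⟨x, hx, rfl⟩ := hv
    rw [mem_filter] at hx
    rw [mem_Icc]
    exact ⟨cnt_pos_of_mem hx.1 le_rfl, cnt_mono U hx.2⟩
  apply eq_of_subset_of_card_le hsub
  rw [card_image_of_injOn hinj, Nat.card_Icc]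
  simp only [cnt]
  omega

lemma image_cnt_full (U : Finset ℕ) : U.image (cnt U) = Icc 1 U.card := by
  have h1 : U.filter (· ≤ mx U) = U := filter_true_of_mem (fun x hx => le_mx hx)
  have h2 := image_cnt_le U (mx U)
  rw [h1] at h2
  rw [h2]
  congr 1
  rw [cnt, h1]

/-- the `k` largest elements of `U` that are `≤ t` -/
def topk (U : Finset ℕ) (t k : ℕ) : Finset ℕ :=
  U.filter (fun x => x ≤ t ∧ cnt U t < cnt U x + k)

lemma topk_subset (U : Finset ℕ) (t k : ℕ) : topk U t k ⊆ U := filter_subset _ _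

lemma topk_subset_le (U : Finset ℕ) (t k : ℕ) : topk U t k ⊆ U.filter (· ≤ t) := by
  intro x hx; rw [topk, mem_filter] at hx; rw [mem_filter]; exact ⟨hx.1, hx.2.1⟩

lemma card_topk (U : Finset ℕ) (t k : ℕ) (hk : k ≤ cnt U t) : (topk U t k).card = k := by
  have h1 : topk U t k = (U.filter (· ≤ t)).filter (fun x => cnt U t < cnt U x + k) := by
    ext x; simp only [topk, mem_filter]; tauto
  have hinj : Set.InjOn (cnt U) ↑(topk U t k) := by
    intro x hx y hy h
    simp only [coe_filter, Set.mem_setOf_eq, topk] at hx hy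
    exact cnt_injOn U hx.1 hy.1 h
  rw [← card_image_of_injOn hinj]
  have h2 : (topk U t k).image (cnt U) = (Icc 1 (cnt U t)).filter (fun v => cnt U t < v + k) := by
    rw [h1, ← image_cnt_le U t, filter_image]
  rw [h2]
  have h3 : (Icc 1 (cnt U t)).filter (fun v => cnt U t < v + k) = Ioc (cnt U t - k) (cnt U t) := by
    ext v; simp only [mem_filter, mem_Icc, mem_Ioc]; omega
  rw [h3, Nat.card_Ioc]
  omega

lemma topk_mem_self {U : Finset ℕ} {t k : ℕ} (ht : t ∈ U) (hk : 1 ≤ k) : t ∈ topk U t k := by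
  rw [topk, mem_filter]
  exact ⟨ht, le_rfl, by omega⟩

lemma mx_topk {U : Finset ℕ} {t k : ℕ} (ht : t ∈ U) (hk : 1 ≤ k) : mx (topk U t k) = t := by
  apply le_antisymm
  · apply Finset.sup_le; intro x hx
    rw [topk, mem_filter] at hx; exact hx.2.1
  · exact le_mx (topk_mem_self ht hk)

lemma topk_closed {U : Finset ℕ} {t k : ℕ} :
    ∀ x ∈ U, ∀ y ∈ topk U t k, y ≤ x → x ≤ t → x ∈ topk U t k := by
  intro x hx y hy hyx hxt
  rw [topk, mem_filter] at hy ⊢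
  have : cnt U y ≤ cnt U x := cnt_mono U hyx
  exact ⟨hx, hxt, by omega⟩

/-- a nonempty upward-closed (within `U ∩ [0,t]`) subset of `U` with max `t`
is a top segment -/
lemma eq_topk {U I : Finset ℕ} (hIU : I ⊆ U) (hne : I.Nonempty) (ht : mx I = mx I)
    (hclosed : ∀ x ∈ U, ∀ y ∈ I, y ≤ x → x ≤ mx I → x ∈ I) :
    I = topk U (mx I) I.card := by
  set t := mx I with htdef
  ext x
  simp only [topk, mem_filter]
  constructor
  · intro hxI
    refine ⟨hIU hxI, le_mx hxI, ?_⟩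
    -- count elements of U in [x, t]: they all lie in I
    set A2 := U.filter (fun z => x < z ∧ z ≤ t) with hA2
    have hsplit : cnt U t = cnt U x + A2.card := by
      rw [cnt, cnt, hA2]
      rw [← card_union_of_disjoint]
      · congr 1
        ext z; simp only [mem_filter, mem_union]
        constructor
        · rintro ⟨hz, hzt⟩
          by_cases hzx : z ≤ x
          · exact Or.inl ⟨hz, hzx⟩
          · exact Or.inr ⟨hz, by omega, hzt⟩
        · rintro (⟨hz, hzx⟩ | ⟨hz, h1, h2⟩)
          · exact ⟨hz, hzx.trans (le_mx hxI)⟩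
          · exact ⟨hz, h2⟩
      · simp only [disjoint_left, mem_filter]
        rintro z ⟨_, h1⟩ ⟨_, h2, _⟩; omega
    have hWsub : insert x A2 ⊆ I := by
      intro z hz
      rcases mem_insert.1 hz with rfl | hz2
      · exact hxI
      · rw [hA2, mem_filter] at hz2
        exact hclosed z hz2.1 x hxI (le_of_lt hz2.2.1) hz2.2.2
    have hxA2 : x ∉ A2 := by rw [hA2, mem_filter]; rintro ⟨_, h, _⟩; omega
    have hcard : A2.card + 1 ≤ I.card := by
      rw [← card_insert_of_notMem hxA2]
      exact card_le_card hWsub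
    omega
  · rintro ⟨hxU, hxt, hcnt⟩
    by_contra hxI
    -- I ⊆ elements in (x, t]
    have hIsub : I ⊆ U.filter (fun z => x < z ∧ z ≤ t) := by
      intro y hy
      rw [mem_filter]
      refine ⟨hIU hy, ?_, le_mx hy⟩
      by_contra hyx
      exact hxI (hclosed x hxU y hy (by omega) hxt)
    set A2 := U.filter (fun z => x < z ∧ z ≤ t) with hA2
    have hsplit : cnt U t = cnt U x + A2.card := by
      rw [cnt, cnt, hA2]
      rw [← card_union_of_disjoint]
      · congr 1
        ext z; simp only [mem_filter, mem_union]
        constructor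
        · rintro ⟨hz, hzt⟩
          by_cases hzx : z ≤ x
          · exact Or.inl ⟨hz, hzx⟩
          · exact Or.inr ⟨hz, by omega, hzt⟩
        · rintro (⟨hz, hzx⟩ | ⟨hz, h1, h2⟩)
          · exact ⟨hz, by omega⟩
          · exact ⟨hz, h2⟩
      · simp only [disjoint_left, mem_filter]
        rintro z ⟨_, h1⟩ ⟨_, h2, _⟩; omega
    have := card_le_card hIsub
    omega

/-! ### chunk 3: definitions of the two counted families -/

def IsNCP (U : Finset ℕ) (b : ℕ) (A : Finset (Finset ℕ)) : Prop :=
  (∀ s ∈ A, s.Nonempty) ∧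
  (∀ s ∈ A, ∀ t ∈ A, s ≠ t → Disjoint s t) ∧
  (∀ x ∈ U, ∃ s ∈ A, x ∈ s) ∧
  (∀ s ∈ A, s ⊆ U) ∧
  (∀ s ∈ A, b < mx s) ∧
  (∀ a b' c d : ℕ, a < b' → b' < c → c < d →
    ∀ s ∈ A, ∀ t ∈ A, a ∈ s → c ∈ s → b' ∈ t → d ∈ t → s = t)

def NCPF (U : Finset ℕ) (b n : ℕ) : Finset (Finset (Finset ℕ)) :=
  U.powerset.powerset.filter (fun A => IsNCP U b A ∧ A.card = n)

lemma mem_NCPF {U : Finset ℕ} {b n : ℕ} {A : Finset (Finset ℕ)} :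
    A ∈ NCPF U b n ↔ IsNCP U b A ∧ A.card = n := by
  rw [NCPF, mem_filter, mem_powerset]
  constructor
  · exact fun h => h.2
  · intro h
    refine ⟨?_, h⟩
    intro s hs
    rw [mem_powerset]
    exact h.1.2.2.2.1 s hs

lemma NCPF_zero (U : Finset ℕ) (b : ℕ) : (NCPF U b 0).card = if U = ∅ then 1 else 0 := by
  split_ifs with h
  · subst h
    have : NCPF ∅ b 0 = {∅} := by
      ext A
      rw [mem_NCPF, mem_singleton]
      constructor
      · intro hA
        exact card_eq_zero.1 hA.2
      · rintro rfl
        refine ⟨⟨?_, ?_, ?_, ?_, ?_, ?_⟩, card_empty⟩ <;> simp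
    rw [this, card_singleton]
  · rw [card_eq_zero, eq_empty_iff_forall_notMem]
    intro A hA
    rw [mem_NCPF] at hA
    obtain ⟨x, hx⟩ := nonempty_iff_ne_empty.2 h
    obtain ⟨s, hs, _⟩ := hA.1.2.2.1 x hx
    rw [card_eq_zero.1 hA.2] at hs
    exact notMem_empty s hs

def IsPairs (u β n : ℕ) (p : Finset ℕ × Finset ℕ) : Prop :=
  p.1 ⊆ Icc 1 u ∧ p.2 ⊆ Icc 1 u ∧ p.1.card = n ∧ p.2.card = n ∧
  (∀ τ ∈ p.2, β < τ) ∧ (0 < u → u ∈ p.1 ∧ u ∈ p.2) ∧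
  (∀ τ ∈ p.2, cnt p.2 τ ≤ cnt p.1 τ)

def PairsF (u β n : ℕ) : Finset (Finset ℕ × Finset ℕ) :=
  (((Icc 1 u).powerset) ×ˢ ((Icc 1 u).powerset)).filter (IsPairs u β n)

lemma mem_PairsF {u β n : ℕ} {p : Finset ℕ × Finset ℕ} :
    p ∈ PairsF u β n ↔ IsPairs u β n p := by
  rw [PairsF, mem_filter, mem_product, mem_powerset, mem_powerset]
  exact ⟨fun h => h.2, fun h => ⟨⟨h.1, h.2.1⟩, h⟩⟩

lemma PairsF_zero (u β : ℕ) : (PairsF u β 0).card = if u = 0 then 1 else 0 := by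
  split_ifs with h
  · subst h
    have : PairsF 0 β 0 = {(∅, ∅)} := by
      ext p
      rw [mem_PairsF, mem_singleton]
      constructor
      · intro hp
        have h1 : p.1 = ∅ := card_eq_zero.1 hp.2.2.1
        have h2 : p.2 = ∅ := card_eq_zero.1 hp.2.2.2.1
        exact Prod.ext h1 h2
      · rintro rfl
        refine ⟨?_, ?_, ?_, ?_, ?_, ?_, ?_⟩ <;> simp
    rw [this, card_singleton]
  · rw [card_eq_zero, eq_empty_iff_forall_notMem]
    intro p hp
    rw [mem_PairsF] at hp
    have h1 : p.1 = ∅ := card_eq_zero.1 hp.2.2.1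
    have := (hp.2.2.2.2.2.1 (by omega)).1
    rw [h1] at this
    exact notMem_empty _ this

def blockOf (A : Finset (Finset ℕ)) (x : ℕ) : Finset ℕ := (A.filter (fun B => x ∈ B)).sup id

lemma blockOf_eq {A : Finset (Finset ℕ)} {B : Finset ℕ} {x : ℕ}
    (hdisj : ∀ s ∈ A, ∀ t ∈ A, s ≠ t → Disjoint s t) (hB : B ∈ A) (hx : x ∈ B) :
    blockOf A x = B := by
  have hfilter : A.filter (fun C => x ∈ C) = {B} := by
    ext C
    simp only [mem_filter, mem_singleton]
    constructor
    · rintro ⟨hC, hxC⟩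
      by_contra hne
      exact (disjoint_left.1 (hdisj C hC B hB hne)) hxC hx
    · rintro rfl
      exact ⟨hB, hx⟩
  rw [blockOf, hfilter, sup_singleton]; rfl

def t1 (A : Finset (Finset ℕ)) : ℕ := minD (A.image mx)

lemma t1_spec {A : Finset (Finset ℕ)} (h : A.Nonempty) :
    (∃ B₀ ∈ A, mx B₀ = t1 A) ∧ ∀ B ∈ A, t1 A ≤ mx B := by
  have himg : (A.image mx).Nonempty := h.image mx
  constructor
  · have := minD_mem himg
    rw [mem_image] at this
    obtain ⟨B₀, hB₀, he⟩ := this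
    exact ⟨B₀, hB₀, he⟩
  · intro B hB
    exact minD_le (mem_image_of_mem mx hB)

/-! ### chunk 4: decomposition of NCPF by the first-closing block -/

def JJ (U : Finset ℕ) (b : ℕ) : Finset (ℕ × ℕ) :=
  ((U.filter (fun t => b < t)) ×ˢ Icc 1 U.card).filter (fun p => p.2 ≤ cnt U p.1)

lemma mem_JJ {U : Finset ℕ} {b : ℕ} {p : ℕ × ℕ} :
    p ∈ JJ U b ↔ p.1 ∈ U ∧ b < p.1 ∧ 1 ≤ p.2 ∧ p.2 ≤ U.card ∧ p.2 ≤ cnt U p.1 := by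
  simp only [JJ, mem_filter, mem_product, mem_Icc]
  tauto

lemma first_block {U : Finset ℕ} {b n : ℕ} {A : Finset (Finset ℕ)}
    (hA : A ∈ NCPF U b (n+1)) :
    blockOf A (t1 A) ∈ A ∧ t1 A ∈ blockOf A (t1 A) ∧ mx (blockOf A (t1 A)) = t1 A ∧
    (∀ B ∈ A, B ≠ blockOf A (t1 A) → t1 A < mx B) ∧
    blockOf A (t1 A) = topk U (t1 A) (blockOf A (t1 A)).card := by
  obtain ⟨⟨hne, hdisj, hcover, hsub, hmax, hnc⟩, hcard⟩ := mem_NCPF.1 hA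
  have hAne : A.Nonempty := card_pos.1 (by omega)
  obtain ⟨⟨B₀, hB₀, hmxB₀⟩, hmin⟩ := t1_spec hAne
  have ht1B₀ : t1 A ∈ B₀ := hmxB₀ ▸ mx_mem (hne B₀ hB₀)
  have hblock : blockOf A (t1 A) = B₀ := blockOf_eq hdisj hB₀ ht1B₀
  have huniq : ∀ B ∈ A, B ≠ B₀ → t1 A < mx B := by
    intro B hB hBne
    rcases eq_or_lt_of_le (hmin B hB) with he | hl
    · exfalso
      have hmem : t1 A ∈ B := by rw [he]; exact mx_mem (hne B hB)
      exact (disjoint_left.1 (hdisj B hB B₀ hB₀ hBne)) hmem ht1B₀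
    · exact hl
  have hclosed : ∀ x ∈ U, ∀ y ∈ B₀, y ≤ x → x ≤ t1 A → x ∈ B₀ := by
    intro x hx y hy hyx hxt1
    by_contra hxI
    obtain ⟨C, hC, hxC⟩ := hcover x hx
    have hCne : C ≠ B₀ := fun he => hxI (he ▸ hxC)
    have hmxC : t1 A < mx C := huniq C hC hCne
    have hyx' : y < x := lt_of_le_of_ne hyx (fun he => hxI (he ▸ hy))
    have hxt1' : x < t1 A := lt_of_le_of_ne hxt1 (fun he => hxI (he ▸ ht1B₀))
    have := hnc y x (t1 A) (mx C) hyx' hxt1' hmxC B₀ hB₀ C hC hy ht1B₀ hxC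
      (mx_mem (hne C hC))
    exact hCne this.symm
  rw [hblock]
  refine ⟨hB₀, ht1B₀, hmxB₀, huniq, ?_⟩
  have := eq_topk (hsub B₀ hB₀) (hne B₀ hB₀) rfl (by rw [hmxB₀]; exact hclosed)
  rw [hmxB₀] at this
  exact this

lemma NCPF_step (U : Finset ℕ) (b n : ℕ) :
    (NCPF U b (n+1)).card
      = ∑ p ∈ JJ U b, (NCPF (U \ topk U p.1 p.2) p.1 n).card := by
  rw [card_eq_sum_card_fiberwise
    (f := fun A => (t1 A, (blockOf A (t1 A)).card)) (t := JJ U b) ?hf]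
  case hf =>
    intro A hA
    dsimp only
    obtain ⟨hB₀A, ht1B₀, hmxB₀, huniq, htopk⟩ := first_block hA
    obtain ⟨⟨hne, hdisj, hcover, hsub, hmax, hnc⟩, hcard⟩ := mem_NCPF.1 hA
    rw [mem_coe, mem_JJ]
    have hsubU : blockOf A (t1 A) ⊆ U := hsub _ hB₀A
    have hsubfil : blockOf A (t1 A) ⊆ U.filter (· ≤ t1 A) := by
      intro z hz
      rw [mem_filter]
      exact ⟨hsubU hz, hmxB₀ ▸ le_mx hz⟩
    refine ⟨hsubU ht1B₀, ?_, ?_, ?_, ?_⟩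
    · have := hmax _ hB₀A
      rw [hmxB₀] at this
      exact this
    · exact card_pos.2 ⟨t1 A, ht1B₀⟩
    · exact card_le_card hsubU
    · exact card_le_card hsubfil
  apply sum_congr rfl
  intro p hp
  obtain ⟨hpU, hpb, hp1, hpu, hpcnt⟩ := mem_JJ.1 hp
  obtain ⟨t, k⟩ := p
  simp only at hpU hpb hp1 hpu hpcnt ⊢
  -- facts about the top segment
  have htI : t ∈ topk U t k := topk_mem_self hpU hp1
  have hmxI : mx (topk U t k) = t := mx_topk hpU hp1
  have hIcard : (topk U t k).card = k := card_topk U t k hpcnt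
  have hIsub : topk U t k ⊆ U := topk_subset U t k
  refine card_bij' (fun A _ => A.erase (topk U t k)) (fun B _ => insert (topk U t k) B)
    ?hi ?hj ?left ?right
  case hi =>
    intro A hA'
    rw [mem_filter] at hA'
    obtain ⟨hA, hfA⟩ := hA'
    rw [Prod.mk.injEq] at hfA
    obtain ⟨hft, hfk⟩ := hfA
    obtain ⟨hB₀A, ht1B₀, hmxB₀, huniq, htopk⟩ := first_block hA
    rw [hfk] at htopk
    rw [hft] at htopk hB₀A huniq
    obtain ⟨⟨hne, hdisj, hcover, hsub, hmax, hnc⟩, hcard⟩ := mem_NCPF.1 hA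
    rw [mem_NCPF]
    have hIA : topk U t k ∈ A := htopk ▸ hB₀A
    constructor
    · refine ⟨?_, ?_, ?_, ?_, ?_, ?_⟩
      · intro s hs; exact hne s (mem_of_mem_erase hs)
      · intro s hs t' ht' h; exact hdisj s (mem_of_mem_erase hs) t' (mem_of_mem_erase ht') h
      · intro x hx
        rw [mem_sdiff] at hx
        obtain ⟨C, hC, hxC⟩ := hcover x hx.1
        refine ⟨C, ?_, hxC⟩
        rw [mem_erase]
        exact ⟨fun he => hx.2 (he ▸ hxC), hC⟩
      · intro s hs z hz
        rw [mem_sdiff]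
        have hsA := mem_of_mem_erase hs
        refine ⟨hsub s hsA hz, ?_⟩
        intro hzI
        exact (disjoint_left.1 (hdisj s hsA _ hIA (ne_of_mem_erase hs))) hz hzI
      · intro s hs
        exact huniq s (mem_of_mem_erase hs)
          (fun he => (ne_of_mem_erase hs) (by rw [he, htopk]))
      · intro a b' c d h1 h2 h3 s hs t' ht' h4 h5 h6 h7
        exact hnc a b' c d h1 h2 h3 s (mem_of_mem_erase hs) t' (mem_of_mem_erase ht') h4 h5 h6 h7
    · rw [card_erase_of_mem hIA, hcard]; omega
  case hj =>
    intro B hB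
    rw [mem_NCPF] at hB
    obtain ⟨⟨hne, hdisj, hcover, hsub, hmax, hnc⟩, hcard⟩ := hB
    have hIB : topk U t k ∉ B := by
      intro hmem
      have := hsub _ hmem htI
      rw [mem_sdiff] at this
      exact this.2 htI
    have hdisj' : ∀ s ∈ insert (topk U t k) B, ∀ t' ∈ insert (topk U t k) B,
        s ≠ t' → Disjoint s t' := by
      intro s hs t' ht' hne'
      rcases mem_insert.1 hs with rfl | hsB <;> rcases mem_insert.1 ht' with rfl | htB
      · exact absurd rfl hne'
      · rw [disjoint_left]
        intro z hz hz'
        have := hsub _ htB hz'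
        rw [mem_sdiff] at this
        exact this.2 hz
      · rw [disjoint_right]
        intro z hz hz'
        have := hsub _ hsB hz'
        rw [mem_sdiff] at this
        exact this.2 hz
      · exact hdisj s hsB t' htB hne'
    have hmem' : insert (topk U t k) B ∈ NCPF U b (n+1) := by
      rw [mem_NCPF]
      constructor
      · refine ⟨?_, hdisj', ?_, ?_, ?_, ?_⟩
        · intro s hs
          rcases mem_insert.1 hs with rfl | hsB
          · exact ⟨t, htI⟩
          · exact hne s hsB
        · intro x hx
          by_cases hxI : x ∈ topk U t k
          · exact ⟨topk U t k, mem_insert_self _ _, hxI⟩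
          · obtain ⟨C, hC, hxC⟩ := hcover x (mem_sdiff.2 ⟨hx, hxI⟩)
            exact ⟨C, mem_insert_of_mem hC, hxC⟩
        · intro s hs
          rcases mem_insert.1 hs with rfl | hsB
          · exact hIsub
          · exact (hsub s hsB).trans (sdiff_subset)
        · intro s hs
          rcases mem_insert.1 hs with rfl | hsB
          · rw [hmxI]; exact hpb
          · exact lt_trans hpb (hmax s hsB)
        · intro a b' c d h1 h2 h3 s hs t' ht' h4 h5 h6 h7
          rcases mem_insert.1 hs with rfl | hsB <;> rcases mem_insert.1 ht' with rfl | htB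
          · rfl
          · exfalso
            have hb'U : b' ∈ U := (hsub _ htB).trans sdiff_subset h6
            have hb'notI : b' ∉ topk U t k := by
              have := hsub _ htB h6
              rw [mem_sdiff] at this
              exact this.2
            have hb't : b' ≤ t := by
              have : c ≤ t := hmxI ▸ le_mx h5
              omega
            exact hb'notI (topk_closed b' hb'U a h4 (le_of_lt h1) hb't)
          · exfalso
            have hcU : c ∈ U := (hsub _ hsB).trans sdiff_subset h5
            have hcnotI : c ∉ topk U t k := by
              have := hsub _ hsB h5
              rw [mem_sdiff] at this
              exact this.2
            have hct : c ≤ t := by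
              have : d ≤ t := hmxI ▸ le_mx h7
              omega
            exact hcnotI (topk_closed c hcU b' h6 (le_of_lt h2) hct)
          · exact hnc a b' c d h1 h2 h3 s hsB t' htB h4 h5 h6 h7
      · rw [card_insert_of_notMem hIB, hcard]
    rw [mem_filter]
    refine ⟨hmem', ?_⟩
    have ht1 : t1 (insert (topk U t k) B) = t := by
      rw [t1]
      apply minD_eq
      · exact mem_image.2 ⟨topk U t k, mem_insert_self _ _, hmxI⟩
      · intro v hv
        rw [mem_image] at hv
        obtain ⟨C, hC, rfl⟩ := hv
        rcases mem_insert.1 hC with rfl | hCB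
        · rw [hmxI]
        · exact le_of_lt (hmax C hCB)
    have hbl : blockOf (insert (topk U t k) B) t = topk U t k :=
      blockOf_eq hdisj' (mem_insert_self _ _) htI
    rw [ht1, hbl, hIcard]
  case left =>
    intro A hA'
    rw [mem_filter] at hA'
    obtain ⟨hA, hfA⟩ := hA'
    rw [Prod.mk.injEq] at hfA
    obtain ⟨hft, hfk⟩ := hfA
    obtain ⟨hB₀A, _, _, _, htopk⟩ := first_block hA
    rw [hfk] at htopk
    rw [hft] at htopk hB₀A
    exact insert_erase (htopk ▸ hB₀A)
  case right =>
    intro B hB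
    rw [mem_NCPF] at hB
    have hIB : topk U t k ∉ B := by
      intro hmem
      have := hB.1.2.2.2.1 _ hmem htI
      rw [mem_sdiff] at this
      exact this.2 htI
    exact erase_insert hIB

/-! ### chunk 5: decomposition of PairsF -/

lemma exists_le_of_cnt_pos {X : Finset ℕ} {z : ℕ} (h : 1 ≤ cnt X z) : ∃ x ∈ X, x ≤ z := by
  obtain ⟨x, hx⟩ := card_pos.1 h
  rw [mem_filter] at hx
  exact ⟨x, hx.1, hx.2⟩

lemma cnt_image_sub {X : Finset ℕ} {k : ℕ} (h : ∀ x ∈ X, k < x) (z : ℕ) :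
    cnt (X.image (fun x => x - k)) z = cnt X (z + k) := by
  rw [cnt, filter_image]
  rw [card_image_of_injOn]
  · rw [cnt]
    congr 1
    apply filter_congr
    intro x hx
    have := h x hx
    exact ⟨fun h2 => by omega, fun h2 => by omega⟩
  · intro x hx y hy hxy
    rw [mem_coe, mem_filter] at hx hy
    have hxy' : x - k = y - k := hxy
    have := h x hx.1
    have := h y hy.1
    omega

lemma cnt_image_add (X : Finset ℕ) (k z : ℕ) :
    cnt (X.image (fun x => x + k)) (z + k) = cnt X z := by
  rw [cnt, filter_image]
  rw [card_image_of_injOn]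
  · rw [cnt]
    congr 1
    apply filter_congr
    intro x _
    exact ⟨fun h2 => by omega, fun h2 => by omega⟩
  · intro x _ y _ hxy
    have hxy' : x + k = y + k := hxy
    omega

lemma cnt_insert {X : Finset ℕ} {a : ℕ} (ha : a ∉ X) (z : ℕ) :
    cnt (insert a X) z = cnt X z + if a ≤ z then 1 else 0 := by
  rw [cnt, filter_insert]
  split_ifs with h
  · rw [card_insert_of_notMem (fun hc => ha (mem_filter.1 hc).1), cnt]
  · rw [cnt]
    omega

lemma cnt_erase {X : Finset ℕ} {a : ℕ} (ha : a ∈ X) (z : ℕ) :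
    cnt (X.erase a) z + (if a ≤ z then 1 else 0) = cnt X z := by
  rw [cnt, filter_erase]
  split_ifs with h
  · have hmem : a ∈ X.filter (· ≤ z) := mem_filter.2 ⟨ha, h⟩
    rw [card_erase_of_mem hmem]
    have h1 : 1 ≤ (X.filter (· ≤ z)).card := cnt_pos_of_mem ha h
    rw [cnt]
    omega
  · have hnm : a ∉ X.filter (· ≤ z) := fun hc => h (mem_filter.1 hc).2
    rw [erase_eq_of_notMem hnm, cnt]
    omega

def JJ' (u β : ℕ) : Finset (ℕ × ℕ) := ((Ioc β u) ×ˢ Icc 1 u).filter (fun p => p.2 ≤ p.1)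

lemma mem_JJ' {u β : ℕ} {p : ℕ × ℕ} :
    p ∈ JJ' u β ↔ β < p.1 ∧ p.1 ≤ u ∧ 1 ≤ p.2 ∧ p.2 ≤ u ∧ p.2 ≤ p.1 := by
  simp only [JJ', mem_filter, mem_product, mem_Ioc, mem_Icc]
  tauto

lemma PairsF_step (u β n : ℕ) :
    (PairsF u β (n+1)).card = ∑ p ∈ JJ' u β, (PairsF (u - p.2) (p.1 - p.2) n).card := by
  rw [card_eq_sum_card_fiberwise (f := fun q => (minD q.2, minD q.1)) (t := JJ' u β) ?hf]
  case hf =>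
    intro q hq
    dsimp only
    rw [mem_coe, mem_PairsF] at hq
    obtain ⟨hS, hT, hSc, hTc, hTβ, hu, hdom⟩ := hq
    have hSne : q.1.Nonempty := card_pos.1 (by omega)
    have hTne : q.2.Nonempty := card_pos.1 (by omega)
    have htq : minD q.2 ∈ q.2 := minD_mem hTne
    have hkq : minD q.1 ∈ q.1 := minD_mem hSne
    have htI := mem_Icc.1 (hT htq)
    have hkI := mem_Icc.1 (hS hkq)
    rw [mem_coe, mem_JJ']
    refine ⟨hTβ _ htq, htI.2, hkI.1, hkI.2, ?_⟩
    have h1 : 1 ≤ cnt q.2 (minD q.2) := cnt_pos_of_mem htq le_rfl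
    have h2 := hdom _ htq
    obtain ⟨x, hx, hxle⟩ := exists_le_of_cnt_pos (le_trans h1 h2)
    exact le_trans (minD_le hx) hxle
  apply sum_congr rfl
  intro p hp
  obtain ⟨hβt, htu, hk1, hku, hkt⟩ := mem_JJ'.1 hp
  obtain ⟨t, k⟩ := p
  simp only at hβt htu hk1 hku hkt ⊢
  refine card_bij'
    (fun q _ => ((q.1.erase k).image (fun x => x - k), (q.2.erase t).image (fun x => x - k)))
    (fun q' _ => (insert k (q'.1.image (fun x => x + k)), insert t (q'.2.image (fun x => x + k))))
    ?hi ?hj ?left ?right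
  case hi =>
    intro q hq'
    rw [mem_filter] at hq'
    obtain ⟨hq, hfq⟩ := hq'
    rw [Prod.mk.injEq] at hfq
    obtain ⟨hft, hfk⟩ := hfq
    rw [mem_PairsF] at hq
    obtain ⟨hS, hT, hSc, hTc, hTβ, hu, hdom⟩ := hq
    have hSne : q.1.Nonempty := card_pos.1 (by omega)
    have hTne : q.2.Nonempty := card_pos.1 (by omega)
    have htq : t ∈ q.2 := hft ▸ minD_mem hTne
    have hkq : k ∈ q.1 := hfk ▸ minD_mem hSne
    have hkmin : ∀ s ∈ q.1, k ≤ s := fun s hs => hfk ▸ minD_le hs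
    have htmin : ∀ τ ∈ q.2, t ≤ τ := fun τ hτ => hft ▸ minD_le hτ
    have herase1 : ∀ x ∈ q.1.erase k, k < x := by
      intro x hx
      have h1 := hkmin x (mem_of_mem_erase hx)
      have h2 := ne_of_mem_erase hx
      omega
    have herase2 : ∀ x ∈ q.2.erase t, t < x := by
      intro x hx
      have h1 := htmin x (mem_of_mem_erase hx)
      have h2 := ne_of_mem_erase hx
      omega
    have herase2' : ∀ x ∈ q.2.erase t, k < x := fun x hx => lt_of_le_of_lt hkt (herase2 x hx)
    rw [mem_PairsF]
    dsimp only [IsPairs]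
    refine ⟨?_, ?_, ?_, ?_, ?_, ?_, ?_⟩
    · intro x hx
      rw [mem_image] at hx
      obtain ⟨y, hy, rfl⟩ := hx
      have h1 := herase1 y hy
      have h2 := mem_Icc.1 (hS (mem_of_mem_erase hy))
      rw [mem_Icc]
      omega
    · intro x hx
      rw [mem_image] at hx
      obtain ⟨y, hy, rfl⟩ := hx
      have h1 := herase2' y hy
      have h2 := mem_Icc.1 (hT (mem_of_mem_erase hy))
      rw [mem_Icc]
      omega
    · have hinj : Set.InjOn (fun x => x - k) ↑(q.1.erase k) := by
        intro x hx y hy hxy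
        rw [mem_coe] at hx hy
        have := herase1 x hx
        have := herase1 y hy
        have hxy' : x - k = y - k := hxy
        omega
      rw [card_image_of_injOn hinj, card_erase_of_mem hkq, hSc]
      omega
    · have hinj : Set.InjOn (fun x => x - k) ↑(q.2.erase t) := by
        intro x hx y hy hxy
        rw [mem_coe] at hx hy
        have := herase2' x hx
        have := herase2' y hy
        have hxy' : x - k = y - k := hxy
        omega
      rw [card_image_of_injOn hinj, card_erase_of_mem htq, hTc]
      omega
    · intro τ hτ
      rw [mem_image] at hτ
      obtain ⟨y, hy, rfl⟩ := hτ
      have := herase2 y hy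
      omega
    · intro h0
      have hklt : k < u := by omega
      have hu' := hu (by omega)
      have hune : u ≠ t := by
        intro he
        have hq2 : q.2 ⊆ {t} := by
          intro τ hτ
          have h1 := htmin τ hτ
          have h2 := (mem_Icc.1 (hT hτ)).2
          rw [mem_singleton]
          omega
        have : q.2.card ≤ 1 := le_trans (card_le_card hq2) (by simp)
        have hn0 : n = 0 := by omega
        obtain ⟨a, ha⟩ := card_eq_one.1 (by omega : q.1.card = 1)
        have : u ∈ q.1 := hu'.1
        rw [ha, mem_singleton] at this
        subst this
        have : k ∈ ({u} : Finset ℕ) := ha ▸ hkq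
        rw [mem_singleton] at this
        omega
      constructor
      · rw [mem_image]
        exact ⟨u, mem_erase.2 ⟨by omega, hu'.1⟩, rfl⟩
      · rw [mem_image]
        exact ⟨u, mem_erase.2 ⟨hune, hu'.2⟩, rfl⟩
    · intro τ' hτ'
      rw [mem_image] at hτ'
      obtain ⟨τ, hτe, rfl⟩ := hτ'
      have hτt := herase2 τ hτe
      have hτq := mem_of_mem_erase hτe
      have h1 : cnt ((q.2.erase t).image (fun x => x - k)) (τ - k) = cnt (q.2.erase t) τ := by
        rw [cnt_image_sub herase2' (τ - k)]
        congr 1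
        omega
      have h2 : cnt ((q.1.erase k).image (fun x => x - k)) (τ - k) = cnt (q.1.erase k) τ := by
        rw [cnt_image_sub herase1 (τ - k)]
        congr 1
        omega
      have h3 := cnt_erase htq τ
      have h4 := cnt_erase hkq τ
      rw [if_pos (le_of_lt hτt)] at h3
      rw [if_pos (le_trans hkt (le_of_lt hτt))] at h4
      have h5 := hdom τ hτq
      omega
  case hj =>
    intro q' hq'
    rw [mem_PairsF] at hq'
    obtain ⟨hS, hT, hSc, hTc, hTβ, hu, hdom⟩ := hq'
    have himg1 : ∀ x ∈ q'.1.image (fun x => x + k), k < x ∧ x ≤ u := by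
      intro x hx
      rw [mem_image] at hx
      obtain ⟨y, hy, rfl⟩ := hx
      have := mem_Icc.1 (hS hy)
      omega
    have himg2 : ∀ x ∈ q'.2.image (fun x => x + k), t < x ∧ x ≤ u := by
      intro x hx
      rw [mem_image] at hx
      obtain ⟨y, hy, rfl⟩ := hx
      have h1 := mem_Icc.1 (hT hy)
      have h2 := hTβ y hy
      omega
    have hknot : k ∉ q'.1.image (fun x => x + k) := fun hc => by have := (himg1 _ hc).1; omega
    have htnot : t ∉ q'.2.image (fun x => x + k) := fun hc => by have := (himg2 _ hc).1; omega
    rw [mem_filter, mem_PairsF]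
    dsimp only [IsPairs]
    refine ⟨⟨?_, ?_, ?_, ?_, ?_, ?_, ?_⟩, ?_⟩
    · intro x hx
      rcases mem_insert.1 hx with rfl | hx2
      · rw [mem_Icc]; omega
      · have := himg1 x hx2; rw [mem_Icc]; omega
    · intro x hx
      rcases mem_insert.1 hx with rfl | hx2
      · rw [mem_Icc]; omega
      · have := himg2 x hx2; rw [mem_Icc]; omega
    · rw [card_insert_of_notMem hknot,
        card_image_of_injOn (fun x _ y _ h => by have h' : x + k = y + k := h; omega), hSc]
    · rw [card_insert_of_notMem htnot,
        card_image_of_injOn (fun x _ y _ h => by have h' : x + k = y + k := h; omega), hTc]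
    · intro τ hτ
      rcases mem_insert.1 hτ with rfl | hτ2
      · exact hβt
      · have := (himg2 τ hτ2).1; omega
    · intro h0
      by_cases hke : k = u
      · have hq'1 : q'.1 = ∅ := by
          rw [← subset_empty]
          intro x hx
          have := mem_Icc.1 (hS hx)
          omega
        have hn0 : n = 0 := by rw [← hSc, hq'1, card_empty]
        have hq'2 : q'.2 = ∅ := card_eq_zero.1 (by omega)
        have hte : t = u := by omega
        subst hke; subst hte
        rw [hq'1, hq'2]
        simp
      · have hu' := hu (by omega)
        constructor
        · apply mem_insert_of_mem
          rw [mem_image]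
          exact ⟨u - k, hu'.1, by omega⟩
        · apply mem_insert_of_mem
          rw [mem_image]
          exact ⟨u - k, hu'.2, by omega⟩
    · intro τ hτ
      rcases mem_insert.1 hτ with rfl | hτ2
      · have hc2 : cnt (q'.2.image (fun x => x + k)) τ = 0 := by
          rw [cnt, card_eq_zero]
          rw [eq_empty_iff_forall_notMem]
          intro x hx
          rw [mem_filter] at hx
          have := (himg2 x hx.1).1
          omega
        rw [cnt_insert htnot, hc2, if_pos le_rfl]
        exact cnt_pos_of_mem (mem_insert_self _ _) hkt
      · obtain ⟨y, hy, rfl⟩ := mem_image.1 hτ2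
        rw [cnt_insert htnot, cnt_insert hknot, cnt_image_add, cnt_image_add]
        have h1 := hdom y hy
        have h2 := (himg2 _ hτ2).1
        have : k ≤ y + k := by omega
        rw [if_pos (le_of_lt h2), if_pos this]
        omega
    · rw [Prod.mk.injEq]
      constructor
      · apply minD_eq (mem_insert_self _ _)
        intro x hx
        rcases mem_insert.1 hx with rfl | hx2
        · exact le_rfl
        · exact le_of_lt (himg2 x hx2).1
      · apply minD_eq (mem_insert_self _ _)
        intro x hx
        rcases mem_insert.1 hx with rfl | hx2
        · exact le_rfl
        · exact le_of_lt (himg1 x hx2).1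
  case left =>
    intro q hq'
    dsimp only
    rw [mem_filter] at hq'
    obtain ⟨hq, hfq⟩ := hq'
    rw [Prod.mk.injEq] at hfq
    obtain ⟨hft, hfk⟩ := hfq
    rw [mem_PairsF] at hq
    obtain ⟨hS, hT, hSc, hTc, hTβ, hu, hdom⟩ := hq
    have hSne : q.1.Nonempty := card_pos.1 (by omega)
    have hTne : q.2.Nonempty := card_pos.1 (by omega)
    have htq : t ∈ q.2 := hft ▸ minD_mem hTne
    have hkq : k ∈ q.1 := hfk ▸ minD_mem hSne
    have hkmin : ∀ s ∈ q.1, k ≤ s := fun s hs => hfk ▸ minD_le hs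
    have htmin : ∀ τ ∈ q.2, t ≤ τ := fun τ hτ => hft ▸ minD_le hτ
    have hims : ∀ (X : Finset ℕ) (c : ℕ), (∀ x ∈ X, c ≤ x) →
        (X.image (fun x => x - c)).image (fun x => x + c) = X := by
      intro X c hX
      rw [image_image]
      calc X.image ((fun x => x + c) ∘ (fun x => x - c)) = X.image id := by
            apply image_congr
            intro x hx
            have := hX x hx
            simp only [Function.comp_apply, id_eq]
            omega
        _ = X := image_id
    rw [Prod.mk.injEq]
    constructor
    · rw [hims _ k (fun x hx => le_of_lt (by
        have h1 := hkmin x (mem_of_mem_erase hx)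
        have h2 := ne_of_mem_erase hx
        omega))]
      exact insert_erase hkq
    · rw [hims _ k (fun x hx => by
        have h1 := htmin x (mem_of_mem_erase hx)
        have h2 := ne_of_mem_erase hx
        omega)]
      exact insert_erase htq
  case right =>
    intro q' hq'
    dsimp only
    rw [mem_PairsF] at hq'
    obtain ⟨hS, hT, hSc, hTc, hTβ, hu, hdom⟩ := hq'
    have himg1 : ∀ x ∈ q'.1.image (fun x => x + k), k < x := by
      intro x hx
      obtain ⟨y, hy, rfl⟩ := mem_image.1 hx
      have := mem_Icc.1 (hS hy)
      omega
    have himg2 : ∀ x ∈ q'.2.image (fun x => x + k), t < x := by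
      intro x hx
      obtain ⟨y, hy, rfl⟩ := mem_image.1 hx
      have h1 := hTβ y hy
      omega
    have hknot : k ∉ q'.1.image (fun x => x + k) := fun hc => by have := himg1 _ hc; omega
    have htnot : t ∉ q'.2.image (fun x => x + k) := fun hc => by have := himg2 _ hc; omega
    rw [Prod.mk.injEq]
    constructor
    · rw [erase_insert hknot, image_image]
      calc q'.1.image ((fun x => x - k) ∘ (fun x => x + k)) = q'.1.image id := by
            apply image_congr
            intro x hx
            simp only [Function.comp_apply, id_eq]
            omega
        _ = q'.1 := image_id
    · rw [erase_insert htnot, image_image]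
      calc q'.2.image ((fun x => x - k) ∘ (fun x => x + k)) = q'.2.image id := by
            apply image_congr
            intro x hx
            simp only [Function.comp_apply, id_eq]
            omega
        _ = q'.2 := image_id

/-! ### chunk 6: the main induction -/

lemma cnt_sdiff_topk (U : Finset ℕ) (t k : ℕ) (hk : k ≤ cnt U t) :
    cnt (U \ topk U t k) t = cnt U t - k := by
  rw [cnt]
  have he : (U \ topk U t k).filter (· ≤ t) = U.filter (· ≤ t) \ topk U t k := by
    ext z
    simp only [mem_filter, mem_sdiff]
    tauto
  rw [he, card_sdiff_of_subset (topk_subset_le U t k), card_topk U t k hk, cnt]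

lemma card_sdiff_topk (U : Finset ℕ) (t k : ℕ) (hk : k ≤ cnt U t) :
    (U \ topk U t k).card = U.card - k := by
  rw [card_sdiff_of_subset (topk_subset U t k), card_topk U t k hk]

lemma main_count : ∀ (n : ℕ) (U : Finset ℕ) (b : ℕ),
    (NCPF U b n).card = (PairsF U.card (cnt U b) n).card := by
  intro n
  induction n with
  | zero =>
    intro U b
    rw [NCPF_zero, PairsF_zero]
    by_cases h : U = ∅
    · rw [if_pos h, if_pos (by rw [h, card_empty])]
    · rw [if_neg h, if_neg (fun hc => h (card_eq_zero.1 hc))]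
  | succ n ih =>
    intro U b
    rw [NCPF_step, PairsF_step]
    refine sum_bij (fun p _ => (cnt U p.1, p.2)) ?hi ?inj ?surj ?heq
    case hi =>
      intro p hp
      obtain ⟨h1, h2, h3, h4, h5⟩ := mem_JJ.1 hp
      rw [mem_JJ']
      exact ⟨cnt_lt_of_mem h1 h2, cnt_le_card U p.1, h3, h4, h5⟩
    case inj =>
      intro p1 hp1 p2 hp2 he
      obtain ⟨h1, _, _, _, _⟩ := mem_JJ.1 hp1
      obtain ⟨h1', _, _, _, _⟩ := mem_JJ.1 hp2
      rw [Prod.mk.injEq] at he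
      have := cnt_injOn U h1 h1' he.1
      exact Prod.ext this he.2
    case surj =>
      intro q hq
      obtain ⟨h1, h2, h3, h4, h5⟩ := mem_JJ'.1 hq
      have : q.1 ∈ Icc 1 U.card := mem_Icc.2 ⟨by omega, h2⟩
      rw [← image_cnt_full U, mem_image] at this
      obtain ⟨t, htU, hte⟩ := this
      have hbt : b < t := by
        by_contra hc
        have := cnt_mono U (show t ≤ b by omega)
        omega
      refine ⟨(t, q.2), ?_, ?_⟩
      · rw [mem_JJ]
        dsimp only
        exact ⟨htU, hbt, h3, h4, by omega⟩
      · rw [Prod.mk.injEq]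
        exact ⟨hte, rfl⟩
    case heq =>
      intro p hp
      obtain ⟨h1, h2, h3, h4, h5⟩ := mem_JJ.1 hp
      rw [ih]
      rw [card_sdiff_topk U p.1 p.2 h5, cnt_sdiff_topk U p.1 p.2 h5]

/-! ### chunk 7: PairsF at full range vs GoodP -/

lemma dom_all {S T : Finset ℕ} (hdom : ∀ τ ∈ T, cnt T τ ≤ cnt S τ) (x : ℕ) :
    cnt T x ≤ cnt S x := by
  by_cases hW : (T.filter (· ≤ x)).Nonempty
  · have hτ : mx (T.filter (· ≤ x)) ∈ T.filter (· ≤ x) := mx_mem hW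
    rw [mem_filter] at hτ
    have he : cnt T x = cnt T (mx (T.filter (· ≤ x))) := by
      rw [cnt, cnt]
      congr 1
      ext z
      simp only [mem_filter]
      constructor
      · rintro ⟨hzT, hzx⟩
        exact ⟨hzT, le_mx (mem_filter.2 ⟨hzT, hzx⟩)⟩
      · rintro ⟨hzT, hzτ⟩
        exact ⟨hzT, le_trans hzτ hτ.2⟩
    rw [he]
    exact le_trans (hdom _ hτ.1) (cnt_mono S hτ.2)
  · have h0 : cnt T x = 0 := by
      rw [cnt, card_eq_zero, not_nonempty_iff_eq_empty] at *
      exact hW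
    omega

lemma PairsF_eq_goodP (m n : ℕ) (hm : 1 ≤ m) (hn : 1 ≤ n) :
    (PairsF m 0 n).card = (GoodP (m-1) (n-1)).card := by
  refine card_bij' (fun p _ => (p.1.erase m, p.2.erase m))
    (fun q _ => (insert m q.1, insert m q.2)) ?hi ?hj ?left ?right
  case hi =>
    intro p hp
    rw [mem_PairsF] at hp
    obtain ⟨hS, hT, hSc, hTc, hTβ, hu, hdom⟩ := hp
    obtain ⟨hmS, hmT⟩ := hu (by omega)
    have hsub : ∀ (X : Finset ℕ), X ⊆ Icc 1 m → X.erase m ⊆ Icc 1 (m-1) := by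
      intro X hX x hx
      have h1 := mem_Icc.1 (hX (mem_of_mem_erase hx))
      have h2 := ne_of_mem_erase hx
      rw [mem_Icc]
      omega
    rw [GoodP, mem_filter, mem_AP]
    refine ⟨⟨⟨hsub _ hS, ?_⟩, ⟨hsub _ hT, ?_⟩⟩, ?_⟩
    · rw [card_erase_of_mem hmS, hSc]
    · rw [card_erase_of_mem hmT, hTc]
    · intro x
      show cnt (p.2.erase m) x ≤ cnt (p.1.erase m) x
      by_cases hx : x < m
      · have e1 := cnt_erase hmS x
        have e2 := cnt_erase hmT x
        rw [if_neg (by omega)] at e1 e2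
        have := dom_all hdom x
        omega
      · rw [cnt_eq_card (hsub _ hT) (by omega), cnt_eq_card (hsub _ hS) (by omega),
          card_erase_of_mem hmS, card_erase_of_mem hmT, hSc, hTc]
  case hj =>
    intro q hq
    rw [GoodP, mem_filter, mem_AP] at hq
    obtain ⟨⟨⟨hS, hSc⟩, ⟨hT, hTc⟩⟩, hdom⟩ := hq
    have hmS : m ∉ q.1 := fun hc => by have := mem_Icc.1 (hS hc); omega
    have hmT : m ∉ q.2 := fun hc => by have := mem_Icc.1 (hT hc); omega
    rw [mem_PairsF]
    refine ⟨?_, ?_, ?_, ?_, ?_, ?_, ?_⟩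
    · intro x hx
      rcases mem_insert.1 hx with rfl | hx2
      · rw [mem_Icc]; omega
      · have := mem_Icc.1 (hS hx2); rw [mem_Icc]; omega
    · intro x hx
      rcases mem_insert.1 hx with rfl | hx2
      · rw [mem_Icc]; omega
      · have := mem_Icc.1 (hT hx2); rw [mem_Icc]; omega
    · rw [card_insert_of_notMem hmS, hSc]; omega
    · rw [card_insert_of_notMem hmT, hTc]; omega
    · intro τ hτ
      rcases mem_insert.1 hτ with rfl | hτ2
      · omega
      · have := mem_Icc.1 (hT hτ2); omega
    · intro _
      exact ⟨mem_insert_self _ _, mem_insert_self _ _⟩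
    · intro τ hτ
      rw [cnt_insert hmS, cnt_insert hmT]
      have := hdom τ
      omega
  case left =>
    intro p hp
    dsimp only
    rw [mem_PairsF] at hp
    obtain ⟨hmS, hmT⟩ := hp.2.2.2.2.2.1 (by omega)
    rw [Prod.mk.injEq]
    exact ⟨insert_erase hmS, insert_erase hmT⟩
  case right =>
    intro q hq
    dsimp only
    rw [GoodP, mem_filter, mem_AP] at hq
    obtain ⟨⟨⟨hS, _⟩, ⟨hT, _⟩⟩, _⟩ := hq
    have hmS : m ∉ q.1 := fun hc => by have := mem_Icc.1 (hS hc); omega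
    have hmT : m ∉ q.2 := fun hc => by have := mem_Icc.1 (hT hc); omega
    rw [Prod.mk.injEq]
    exact ⟨erase_insert hmS, erase_insert hmT⟩

lemma goodP_zero (M : ℕ) : (GoodP M 0).card = 1 := by
  have : GoodP M 0 = {(∅, ∅)} := by
    ext p
    rw [GoodP, mem_filter, mem_AP, mem_singleton]
    constructor
    · rintro ⟨⟨⟨_, h1⟩, ⟨_, h2⟩⟩, _⟩
      exact Prod.ext (card_eq_zero.1 h1) (card_eq_zero.1 h2)
    · rintro rfl
      refine ⟨⟨⟨by simp, by simp⟩, ⟨by simp, by simp⟩⟩, ?_⟩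
      intro x
      simp [cnt]
  rw [this, card_singleton]

/-! ### chunk 8: the Narayana binomial identity -/

lemma narayana_id (m n : ℕ) (hn : 2 ≤ n) (hnm : n ≤ m) :
    ((m-1).choose (n-1) : ℚ) * ((m-1).choose (n-1))
      = (m.choose n : ℚ) * (m.choose (n-1)) / m
        + ((m-1).choose n : ℚ) * ((m-1).choose (n-2)) := by
  have hm1 : 1 ≤ m := by omega
  set d := m - n with hd
  set e := n - 1 with he
  have E1 : m.choose n * n = m * ((m-1).choose (n-1)) := by
    have h := Nat.add_one_mul_choose_eq (m-1) (n-1)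
    rw [show m - 1 + 1 = m by omega, show n - 1 + 1 = n by omega] at h
    linarith [h]
  have E2 : m.choose n * n = m.choose (n-1) * (d+1) := by
    have h := Nat.choose_succ_right_eq m (n-1)
    rw [show n - 1 + 1 = n by omega, show m - (n-1) = d + 1 by omega] at h
    exact h
  have E3 : (m-1).choose n * n = (m-1).choose (n-1) * d := by
    have h := Nat.choose_succ_right_eq (m-1) (n-1)
    rw [show n - 1 + 1 = n by omega, show m - 1 - (n-1) = d by omega] at h
    exact h
  have E4 : (m-1).choose (n-1) * e = (m-1).choose (n-2) * (d+1) := by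
    have h := Nat.choose_succ_right_eq (m-1) (n-2)
    rw [show n - 2 + 1 = n - 1 by omega, show m - 1 - (n-2) = d + 1 by omega] at h
    exact h
  have F1 : (m.choose n : ℚ) * n = m * ((m-1).choose (n-1)) := by exact_mod_cast E1
  have F2 : (m.choose n : ℚ) * n = (m.choose (n-1)) * ((d:ℚ)+1) := by exact_mod_cast E2
  have F3 : ((m-1).choose n : ℚ) * n = ((m-1).choose (n-1)) * d := by exact_mod_cast E3
  have F4 : ((m-1).choose (n-1) : ℚ) * e = ((m-1).choose (n-2)) * ((d:ℚ)+1) := by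
    exact_mod_cast E4
  have hn0 : (n:ℚ) ≠ 0 := by
    have : 0 < n := by omega
    exact_mod_cast this.ne'
  have hd0 : ((d:ℚ)+1) ≠ 0 := by positivity
  have hm0 : (m:ℚ) ≠ 0 := by
    have : 0 < m := by omega
    exact_mod_cast this.ne'
  have hmQ : (m:ℚ) = n + d := by
    have : m = n + d := by omega
    exact_mod_cast this
  have hnQ : (n:ℚ) = e + 1 := by
    have : n = e + 1 := by omega
    exact_mod_cast this
  have hP : (m.choose n : ℚ) = m * ((m-1).choose (n-1)) / n := by
    rw [eq_div_iff hn0]; linarith [F1]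
  have hQ : (m.choose (n-1) : ℚ) = m * ((m-1).choose (n-1)) / ((d:ℚ)+1) := by
    rw [eq_div_iff hd0]; linarith [F1, F2]
  have hB1 : ((m-1).choose n : ℚ) = ((m-1).choose (n-1)) * d / n := by
    rw [eq_div_iff hn0]; linarith [F3]
  have hB2 : ((m-1).choose (n-2) : ℚ) = ((m-1).choose (n-1)) * e / ((d:ℚ)+1) := by
    rw [eq_div_iff hd0]; linarith [F4]
  rw [hP, hQ, hB1, hB2, hmQ, hnQ]
  have he0 : ((e:ℚ)+1) ≠ 0 := by positivity
  field_simp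
  ring

end
end NCX

/-- `A` is a partition of `Fin m` into nonempty pairwise disjoint blocks. -/
def IsPartitionOfFin (m : ℕ) (A : Finset (Finset (Fin m))) : Prop :=
  (∀ s ∈ A, s.Nonempty) ∧
  (∀ s ∈ A, ∀ t ∈ A, s ≠ t → Disjoint s t) ∧
  (∀ x : Fin m, ∃ s ∈ A, x ∈ s)

/-- `A` is non-crossing: there are no `a < b < c < d` with `a, c` in one block and
`b, d` in a different block. -/
def IsNoncrossing (m : ℕ) (A : Finset (Finset (Fin m))) : Prop :=
  ∀ a b c d : Fin m, a < b → b < c → c < d →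
    ∀ s ∈ A, ∀ t ∈ A, a ∈ s → c ∈ s → b ∈ t → d ∈ t → s = t

open Finset NCX in
lemma transfer_card (m n : ℕ) (hm : 1 ≤ m) :
    Nat.card {A : Finset (Finset (Fin m)) //
        IsPartitionOfFin m A ∧ IsNoncrossing m A ∧ A.card = n}
      = (NCPF (Icc 1 m) 0 n).card := by
  classical
  rw [Nat.card_eq_fintype_card, Fintype.card_subtype]
  have hmlt : 0 < m := hm
  set f : Fin m → ℕ := fun i => (i : ℕ) + 1 with hf
  set g : ℕ → Fin m := fun x => (⟨(x - 1) % m, Nat.mod_lt _ hmlt⟩ : Fin m) with hg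
  have hgf : ∀ i : Fin m, g (f i) = i := by
    intro i
    apply Fin.ext
    show ((i : ℕ) + 1 - 1) % m = (i : ℕ)
    simp only [Nat.add_sub_cancel]
    exact Nat.mod_eq_of_lt i.isLt
  have hfg : ∀ x ∈ Icc 1 m, f (g x) = x := by
    intro x hx
    rw [mem_Icc] at hx
    show (x - 1) % m + 1 = x
    rw [Nat.mod_eq_of_lt (by omega)]
    omega
  have hrt1 : ∀ B : Finset (Fin m), (B.image f).image g = B := by
    intro B
    rw [image_image]
    calc B.image (g ∘ f) = B.image id := image_congr (fun i _ => hgf i)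
      _ = B := image_id
  have hrt2 : ∀ B : Finset ℕ, B ⊆ Icc 1 m → (B.image g).image f = B := by
    intro B hB
    rw [image_image]
    calc B.image (f ∘ g) = B.image id := image_congr (fun x hx => hfg x (hB hx))
      _ = B := image_id
  have hfinj' : Function.Injective f := by
    intro i j h
    apply Fin.ext
    have : (i : ℕ) + 1 = (j : ℕ) + 1 := h
    omega
  have hfsub : ∀ B : Finset (Fin m), B.image f ⊆ Icc 1 m := by
    intro B x hx
    obtain ⟨i, _, rfl⟩ := mem_image.1 hx
    rw [mem_Icc]
    have := i.isLt
    show 1 ≤ (i : ℕ) + 1 ∧ (i : ℕ) + 1 ≤ m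
    omega
  refine card_bij' (fun A _ => A.image (fun B => B.image f))
      (fun A _ => A.image (fun B => B.image g)) ?hi ?hj ?left ?right
  case hi =>
    intro A hA
    rw [mem_filter] at hA
    obtain ⟨-, ⟨hne, hdisj, hcover⟩, hnc, hcard⟩ := hA
    rw [mem_NCPF]
    refine ⟨⟨?_, ?_, ?_, ?_, ?_, ?_⟩, ?_⟩
    · intro s hs
      obtain ⟨B, hB, rfl⟩ := mem_image.1 hs
      exact (hne B hB).image f
    · intro s hs t ht hst
      obtain ⟨B, hB, rfl⟩ := mem_image.1 hs
      obtain ⟨C, hC, rfl⟩ := mem_image.1 ht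
      have hBC : B ≠ C := fun he => hst (by rw [he])
      rw [disjoint_left]
      intro z hzB hzC
      obtain ⟨i, hiB, rfl⟩ := mem_image.1 hzB
      obtain ⟨j, hjC, hji⟩ := mem_image.1 hzC
      have : j = i := hfinj' hji
      subst this
      exact (disjoint_left.1 (hdisj B hB C hC hBC)) hiB hjC
    · intro x hx
      obtain ⟨B, hB, hiB⟩ := hcover (g x)
      exact ⟨B.image f, mem_image_of_mem _ hB, by
        rw [← hfg x hx]; exact mem_image_of_mem f hiB⟩
    · intro s hs
      obtain ⟨B, hB, rfl⟩ := mem_image.1 hs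
      exact hfsub B
    · intro s hs
      obtain ⟨B, hB, rfl⟩ := mem_image.1 hs
      have hne' : (B.image f).Nonempty := (hne B hB).image f
      have := hfsub B (mx_mem hne')
      rw [mem_Icc] at this
      omega
    · intro a b' c d h1 h2 h3 s hs t ht ha hc hb hd
      obtain ⟨B, hB, rfl⟩ := mem_image.1 hs
      obtain ⟨C, hC, rfl⟩ := mem_image.1 ht
      obtain ⟨ia, hia, rfl⟩ := mem_image.1 ha
      obtain ⟨ic, hic, rfl⟩ := mem_image.1 hc
      obtain ⟨ib, hib, rfl⟩ := mem_image.1 hb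
      obtain ⟨id', hid, rfl⟩ := mem_image.1 hd
      have l1 : ia < ib := by rw [Fin.lt_def]; simp only [hf] at h1 ⊢; omega
      have l2 : ib < ic := by rw [Fin.lt_def]; simp only [hf] at h2 ⊢; omega
      have l3 : ic < id' := by rw [Fin.lt_def]; simp only [hf] at h3 ⊢; omega
      have := hnc ia ib ic id' l1 l2 l3 B hB C hC hia hic hib hid
      rw [this]
    · rw [card_image_of_injOn, hcard]
      intro B hB C hC he
      have he' : B.image f = C.image f := he
      have : (B.image f).image g = (C.image f).image g := by rw [he']
      rwa [hrt1, hrt1] at this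
  case hj =>
    intro A hA
    rw [mem_NCPF] at hA
    obtain ⟨⟨hne, hdisj, hcover, hsub, hmx, hnc⟩, hcard⟩ := hA
    rw [mem_filter]
    refine ⟨mem_univ _, ⟨?_, ?_, ?_⟩, ?_, ?_⟩
    · intro s hs
      obtain ⟨B, hB, rfl⟩ := mem_image.1 hs
      exact (hne B hB).image g
    · intro s hs t ht hst
      obtain ⟨B, hB, rfl⟩ := mem_image.1 hs
      obtain ⟨C, hC, rfl⟩ := mem_image.1 ht
      have hBC : B ≠ C := fun he => hst (by rw [he])
      rw [disjoint_left]
      intro i hiB hiC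
      obtain ⟨x, hxB, rfl⟩ := mem_image.1 hiB
      obtain ⟨y, hyC, hyx⟩ := mem_image.1 hiC
      have hxy : y = x := by
        have e1 := hfg x (hsub B hB hxB)
        have e2 := hfg y (hsub C hC hyC)
        rw [← e1, ← e2, hyx]
      subst hxy
      exact (disjoint_left.1 (hdisj B hB C hC hBC)) hxB hyC
    · intro i
      obtain ⟨B, hB, hxB⟩ := hcover (f i) (hfsub {i} (mem_image_of_mem f (mem_singleton_self i)))
      refine ⟨B.image g, mem_image_of_mem _ hB, ?_⟩
      rw [← hgf i]
      exact mem_image_of_mem g hxB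
    · intro ia ib ic id' l1 l2 l3 s hs t ht ha hc hb hd
      obtain ⟨B, hB, rfl⟩ := mem_image.1 hs
      obtain ⟨C, hC, rfl⟩ := mem_image.1 ht
      obtain ⟨xa, hxa, hea⟩ := mem_image.1 ha
      obtain ⟨xc, hxc, hec⟩ := mem_image.1 hc
      obtain ⟨xb, hxb, heb⟩ := mem_image.1 hb
      obtain ⟨xd, hxd, hed⟩ := mem_image.1 hd
      have ea : f ia = xa := by rw [← hea, hfg xa (hsub B hB hxa)]
      have ec : f ic = xc := by rw [← hec, hfg xc (hsub B hB hxc)]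
      have eb : f ib = xb := by rw [← heb, hfg xb (hsub C hC hxb)]
      have ed : f id' = xd := by rw [← hed, hfg xd (hsub C hC hxd)]
      have m1 : f ia < f ib := by simp only [hf]; rw [Fin.lt_def] at l1; omega
      have m2 : f ib < f ic := by simp only [hf]; rw [Fin.lt_def] at l2; omega
      have m3 : f ic < f id' := by simp only [hf]; rw [Fin.lt_def] at l3; omega
      rw [ea] at m1; rw [eb] at m1 m2; rw [ec] at m2 m3; rw [ed] at m3
      have := hnc xa xb xc xd m1 m2 m3 B hB C hC hxa hxc hxb hxd
      rw [this]
    · rw [card_image_of_injOn, hcard]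
      intro B hB C hC he
      have he' : B.image g = C.image g := he
      have : (B.image g).image f = (C.image g).image f := by rw [he']
      rwa [hrt2 B (hsub B (mem_coe.1 hB)), hrt2 C (hsub C (mem_coe.1 hC))] at this
  case left =>
    intro A hA
    rw [image_image]
    calc A.image ((fun B => B.image g) ∘ (fun B => B.image f)) = A.image id :=
          image_congr (fun B _ => hrt1 B)
      _ = A := image_id
  case right =>
    intro A hA
    rw [mem_NCPF] at hA
    rw [image_image]
    calc A.image ((fun B => B.image f) ∘ (fun B => B.image g)) = A.image id :=
          image_congr (fun B hB => hrt2 B (hA.1.2.2.2.1 B hB))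
      _ = A := image_id

/-- the number of non-crossing partitions of `m` cyclically ordered
points into exactly `n` blocks equals the Narayana number
`N_{m,n} = (1/m) C(m,n) C(m,n−1)`. -/
theorem noncrossing_partitions_card (m n : ℕ) (hm : 1 ≤ m) (hn : 1 ≤ n) (hnm : n ≤ m) :
    (Nat.card {A : Finset (Finset (Fin m)) //
        IsPartitionOfFin m A ∧ IsNoncrossing m A ∧ A.card = n} : ℚ) =
      (m.choose n * m.choose (n - 1) : ℚ) / m := by
  have hIcc : (Icc 1 m).card = m := by rw [Nat.card_Icc]; omega
  have hcnt0 : NCX.cnt (Icc 1 m) 0 = 0 := NCX.cnt_zero (le_refl (Icc 1 m))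
  have hchain : Nat.card {A : Finset (Finset (Fin m)) //
      IsPartitionOfFin m A ∧ IsNoncrossing m A ∧ A.card = n}
        = (NCX.GoodP (m-1) (n-1)).card := by
    rw [transfer_card m n hm, NCX.main_count n (Icc 1 m) 0, hIcc, hcnt0,
      NCX.PairsF_eq_goodP m n hm hn]
  rw [hchain]
  by_cases hn1 : n = 1
  · subst hn1
    rw [NCX.goodP_zero]
    simp only [Nat.choose_one_right, Nat.sub_self, Nat.choose_zero_right]
    rw [Nat.cast_one]
    field_simp
  · have hn2 : 2 ≤ n := by omega
    have h1 := NCX.good_add_bad (m-1) (n-1)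
    have h2 := NCX.card_badP (m-1) (n-1) (by omega)
    rw [show n - 1 + 1 = n by omega, show n - 1 - 1 = n - 2 by omega] at h2
    rw [NCX.card_AP] at h1 h2
    have hQ : ((NCX.GoodP (m-1) (n-1)).card : ℚ)
        + ((m-1).choose n : ℚ) * ((m-1).choose (n-2))
        = ((m-1).choose (n-1) : ℚ) * ((m-1).choose (n-1)) := by
      rw [h2] at h1
      exact_mod_cast h1
    have hid := NCX.narayana_id m n hn2 hnm
    linarith [hQ, hid]
end
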